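/- Let W ⊆ ℝ^d be open, let Z ⊆ W be nonempty and relatively closed in W, and let H : W → ℝ^r be continuously differentiable with H vanishing on Z. Then for every compact K ⊆ W there exists a constant L > 0 such that |H(w)| ≤ L · dist(w, Z) for all w ∈ K. -/

import Mathlib

open Metric

/-- Let `W ⊆ ℝ^d` be open, `Z ⊆ W` nonempty and relatively closed in `W`, and
`H : W → ℝ^r` be `C¹` with `H = 0` on `Z`.  Then for every compact `K ⊆ W` there is
`L > 0` with `|H(w)| ≤ L · dist(w, Z)` for all `w ∈ K`. -/
theorem vanishing_on_closed_set_dist_bound {d r : ℕ}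
    (W Z K : Set (EuclideanSpace ℝ (Fin d)))
    (hW : IsOpen W) (hZW : Z ⊆ W) (hZne : Z.Nonempty)
    (hZclosed : closure Z ∩ W ⊆ Z)
    (H : EuclideanSpace ℝ (Fin d) → EuclideanSpace ℝ (Fin r))
    (hH : ContDiffOn ℝ 1 H W)
    (hHZ : ∀ z ∈ Z, H z = 0)
    (hK : IsCompact K) (hKW : K ⊆ W) :
    ∃ L > 0, ∀ w ∈ K, ‖H w‖ ≤ L * infDist w Z := by
  -- thickening of K inside W
  obtain ⟨ε, hε, hKε⟩ := hK.exists_cthickening_subset_open hW hKW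
  have hK' : IsCompact (cthickening ε K) := hK.cthickening
  -- derivative bound M on the thickening
  have hderiv : ContinuousOn (fderiv ℝ H) W :=
    hH.continuousOn_fderiv_of_isOpen hW le_rfl
  obtain ⟨M0, hM0⟩ := hK'.exists_bound_of_continuousOn (hderiv.mono hKε)
  set M := max M0 0 with hMdef
  have hMnn : 0 ≤ M := le_max_right _ _
  have hM : ∀ x ∈ cthickening ε K, ‖fderiv ℝ H x‖ ≤ M :=
    fun x hx => (hM0 x hx).trans (le_max_left _ _)
  -- bound B on ‖H‖ on K
  obtain ⟨B0, hB0⟩ := hK.exists_bound_of_continuousOn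
    ((hH.continuousOn).mono hKW)
  set B := max B0 0 with hBdef
  have hBnn : 0 ≤ B := le_max_right _ _
  have hB : ∀ x ∈ K, ‖H x‖ ≤ B := fun x hx => (hB0 x hx).trans (le_max_left _ _)
  have hdiff : DifferentiableOn ℝ H W := hH.differentiableOn one_ne_zero
  refine ⟨2 * M + 2 * B / ε + 1, by positivity, fun w hw => ?_⟩
  have hBε : (0:ℝ) ≤ 2 * B / ε := by positivity
  have hL1 : 2 * M ≤ 2 * M + 2 * B / ε + 1 := by linarith
  have hL2 : 2 * B / ε ≤ 2 * M + 2 * B / ε + 1 := by linarith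
  have hdnn : 0 ≤ infDist w Z := infDist_nonneg
  by_cases hcase : infDist w Z < ε / 2
  · rcases eq_or_lt_of_le hdnn with h0 | h0
    · -- infDist = 0 : w ∈ closure Z ∩ W ⊆ Z
      have hwZ : w ∈ Z := hZclosed ⟨(mem_closure_iff_infDist_zero hZne).2 h0.symm, hKW hw⟩
      simp only [hHZ w hwZ, norm_zero]
      positivity
    · -- pick z with dist w z < min (2 * infDist) ε
      have hη : infDist w Z < min (2 * infDist w Z) ε := by
        refine lt_min (by linarith) (by linarith)
      obtain ⟨z, hzZ, hzd⟩ := (infDist_lt_iff hZne).1 hη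
      have hzε : z ∈ closedBall w ε :=
        mem_closedBall'.2 (le_of_lt (lt_of_lt_of_le hzd (min_le_right _ _)))
      have hball : closedBall w ε ⊆ cthickening ε K := closedBall_subset_cthickening hw ε
      have hballW : closedBall w ε ⊆ W := hball.trans hKε
      have hmvt : ‖H w - H z‖ ≤ M * ‖w - z‖ := by
        refine (convex_closedBall w ε).norm_image_sub_le_of_norm_fderiv_le
          (fun x hx => (hdiff x (hballW hx)).differentiableAt (hW.mem_nhds (hballW hx)))
          (fun x hx => hM x (hball hx)) hzε (mem_closedBall_self (le_of_lt hε))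
      rw [hHZ z hzZ, sub_zero] at hmvt
      have : ‖H w‖ ≤ M * (2 * infDist w Z) := by
        refine hmvt.trans ?_
        have : ‖w - z‖ < 2 * infDist w Z := by
          rw [← dist_eq_norm]; exact lt_of_lt_of_le hzd (min_le_left _ _)
        nlinarith
      calc ‖H w‖ ≤ 2 * M * infDist w Z := by linarith [this]
        _ ≤ (2 * M + 2 * B / ε + 1) * infDist w Z := by nlinarith
  · -- far from Z
    push_neg at hcase
    have h1 : ‖H w‖ ≤ B := hB w hw
    have h2 : B = 2 * B / ε * (ε / 2) := by field_simp
    calc ‖H w‖ ≤ 2 * B / ε * (ε / 2) := by rw [← h2]; exact h1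
      _ ≤ 2 * B / ε * infDist w Z := by
          apply mul_le_mul_of_nonneg_left hcase (by positivity)
      _ ≤ (2 * M + 2 * B / ε + 1) * infDist w Z := by nlinarith
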